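/- Let f : A → B be a function between finite sets and for each i let kᵢ be the number of b ∈ B with |f⁻¹(b)| = i. Then the group of automorphisms of f in the arrow category of finite sets (pairs of bijections (α,β) with f∘α = β∘f) is isomorphic to the product over i of the wreath products Σᵢ ≀ Σ_{kᵢ}. -/

import Mathlib

open Equiv

/-- The automorphism group of `f : A → B` in the arrow category of sets: pairs of
bijections `(α, β)` with `f ∘ α = β ∘ f`, as a subgroup of `Perm A × Perm B`. -/
def arrowAut {A B : Type*} (f : A → B) : Subgroup (Perm A × Perm B) where
  carrier := {p | ∀ a, f (p.1 a) = p.2 (f a)}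
  one_mem' := fun _ => rfl
  mul_mem' := by
    intro p q hp hq a
    simp only [Prod.fst_mul, Prod.snd_mul, Perm.mul_apply]
    rw [hp, hq]
  inv_mem' := by
    intro p hp a
    simp only [Prod.fst_inv, Prod.snd_inv, Set.mem_setOf_eq] at *
    have := hp (p.1⁻¹ a)
    rw [← Perm.mul_apply, mul_inv_cancel, Perm.one_apply] at this
    rw [this, ← Perm.mul_apply, inv_mul_cancel, Perm.one_apply]

/-- The homomorphism `Perm (Fin k) →* MulAut ((Fin k) → G)` permuting coordinates. -/
def permCoord (G : Type*) [Group G] (k : ℕ) : Perm (Fin k) →* MulAut (Fin k → G) where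
  toFun σ := MulEquiv.arrowCongr σ (MulEquiv.refl G)
  map_one' := by ext v i; rfl
  map_mul' := fun σ τ => by ext v i; rfl

/-- The wreath product `Σᵢ ≀ Σₖ = (Σᵢ)ᵏ ⋊ Σₖ`. -/
abbrev Wreath (i k : ℕ) : Type :=
  (Fin k → Perm (Fin i)) ⋊[permCoord (Perm (Fin i)) k] Perm (Fin k)

lemma arrowAut_inv {A B : Type*} {f : A → B} {p : Perm A × Perm B}
    (hp : p ∈ arrowAut f) (a : A) : f (p.1⁻¹ a) = p.2⁻¹ (f a) :=
  (arrowAut f).inv_mem hp a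

/-- Conjugation iso between arrow automorphism groups. -/
def arrowAutCongr {A A' B B' : Type*} (f : A → B) (f' : A' → B')
    (eA : A ≃ A') (eB : B ≃ B') (h : ∀ a, f' (eA a) = eB (f a)) :
    arrowAut f ≃* arrowAut f' where
  toFun p := ⟨(eA.permCongr p.1.1, eB.permCongr p.1.2), by
    intro a'
    simp only [permCongr_apply]
    have h2 : f (eA.symm a') = eB.symm (f' a') := by
      rw [← eA.apply_symm_apply a'] ; rw [h (eA.symm a')]
      simp
    rw [h, p.2 (eA.symm a'), h2]⟩
  invFun p := ⟨(eA.symm.permCongr p.1.1, eB.symm.permCongr p.1.2), by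
    intro a
    simp only [permCongr_apply, symm_symm]
    apply eB.injective
    rw [eB.apply_symm_apply, ← h (eA.symm ((p : Perm A' × Perm B').1 (eA a))),
      eA.apply_symm_apply, p.2 (eA a), h a]⟩
  left_inv p := by
    apply Subtype.ext; apply Prod.ext <;> · apply Equiv.ext; intro x; simp
  right_inv p := by
    apply Subtype.ext; apply Prod.ext <;> · apply Equiv.ext; intro x; simp
  map_mul' p q := by
    apply Subtype.ext; apply Prod.ext <;> · apply Equiv.ext; intro x; simp

namespace WreathAut

variable {i k : ℕ}

/-- The fiberwise permutation extracted from an automorphism of `fst`. -/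
def fibPerm (p : Perm (Fin k × Fin i) × Perm (Fin k))
    (hp : p ∈ arrowAut (Prod.fst : Fin k × Fin i → Fin k)) (j : Fin k) :
    Perm (Fin i) where
  toFun x := (p.1 (p.2⁻¹ j, x)).2
  invFun x := (p.1⁻¹ (j, x)).2
  left_inv x := by
    have h1 : p.1 (p.2⁻¹ j, x) = (j, (p.1 (p.2⁻¹ j, x)).2) := by
      refine Prod.ext ?_ rfl
      have := hp (p.2⁻¹ j, x)
      simpa using this
    show (p.1⁻¹ ((j : Fin k), (p.1 (p.2⁻¹ j, x)).2)).2 = x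
    rw [← h1]
    simp
  right_inv x := by
    have h1 : p.1⁻¹ (j, x) = (p.2⁻¹ j, (p.1⁻¹ (j, x)).2) := by
      refine Prod.ext ?_ rfl
      have := arrowAut_inv hp (j, x)
      simpa using this
    show (p.1 ((p.2⁻¹ j : Fin k), (p.1⁻¹ (j, x)).2)).2 = x
    rw [← h1]
    simp

/-- `Σᵢ ≀ Σₖ` is the automorphism group of `fst : Fin k × Fin i → Fin k`. -/
def iso (i k : ℕ) :
    Wreath i k ≃* arrowAut (Prod.fst : Fin k × Fin i → Fin k) where
  toFun w := ⟨(prodShear w.right (fun j => w.left (w.right j)), w.right),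
    fun _ => rfl⟩
  invFun p := ⟨fibPerm p.1 p.2, p.1.2⟩
  left_inv w := by
    refine SemidirectProduct.ext ?_ rfl
    funext j
    apply Equiv.ext; intro x
    simp [fibPerm, prodShear]
  right_inv p := by
    apply Subtype.ext; refine Prod.ext ?_ rfl
    apply Equiv.ext
    rintro ⟨j, x⟩
    simp only [prodShear, coe_fn_mk, fibPerm, Perm.inv_def, symm_apply_apply]
    have h1 : (p : Perm (Fin k × Fin i) × Perm (Fin k)).1 (j, x)
        = ((p : Perm (Fin k × Fin i) × Perm (Fin k)).2 j,
           ((p : Perm (Fin k × Fin i) × Perm (Fin k)).1 (j, x)).2) := by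
      refine Prod.ext ?_ rfl
      have := p.2 (j, x)
      simpa using this
    exact h1.symm
  map_mul' w₁ w₂ := by
    apply Subtype.ext; apply Prod.ext <;>
      simp only [Subgroup.coe_mul, Prod.fst_mul, Prod.snd_mul]
    · apply Equiv.ext
      rintro ⟨j, x⟩
      simp [prodShear, permCoord, MulEquiv.arrowCongr]
    · rfl

end WreathAut

namespace SigmaDecomp

variable {n : ℕ} (K : Fin (n + 1) → ℕ)

/-- The standard model function. -/
def F : (Σ i : Fin (n + 1), Fin (K i) × Fin (i : ℕ)) → Σ i : Fin (n + 1), Fin (K i) :=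
  fun a => ⟨a.1, a.2.1⟩

/-- Fibers of the standard model. -/
noncomputable def fiberEquiv (i : Fin (n + 1)) (j : Fin (K i)) :
    Fin (i : ℕ) ≃ {a : Σ i : Fin (n + 1), Fin (K i) × Fin (i : ℕ) // F K a = ⟨i, j⟩} :=
  Equiv.ofBijective (fun x => ⟨⟨i, (j, x)⟩, rfl⟩) (by
    constructor
    · intro x y h
      simpa using congrArg (fun a => a.1) h
    · rintro ⟨⟨i', ⟨j', x⟩⟩, h⟩
      obtain rfl : i' = i := congrArg Sigma.fst h
      obtain rfl : j' = j := by
        simpa [F, Sigma.mk.inj_iff] using h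
      exact ⟨x, rfl⟩)

lemma card_fiber (i : Fin (n + 1)) (j : Fin (K i)) :
    Fintype.card {a : Σ i : Fin (n + 1), Fin (K i) × Fin (i : ℕ) // F K a = ⟨i, j⟩} = (i : ℕ) := by
  rw [← Fintype.card_fin (i : ℕ)]
  exact (Fintype.card_congr (fiberEquiv K i j)).symm

variable {K}

/-- An automorphism's target permutation preserves the index. -/
lemma snd_fst_eq (p : Perm (Σ i : Fin (n + 1), Fin (K i) × Fin (i : ℕ))
      × Perm (Σ i : Fin (n + 1), Fin (K i)))
    (hp : p ∈ arrowAut (F K)) (b : Σ i : Fin (n + 1), Fin (K i)) :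
    (p.2 b).1 = b.1 := by
  have e : {a // F K a = b} ≃ {a // F K a = p.2 b} :=
    { toFun := fun x => ⟨p.1 x, by rw [hp, x.2]⟩
      invFun := fun x => ⟨p.1⁻¹ x, by rw [arrowAut_inv hp, x.2, Perm.inv_def, symm_apply_apply]⟩
      left_inv := fun x => by simp
      right_inv := fun x => by simp }
  have h1 := card_fiber K b.1 b.2
  have h2 := card_fiber K (p.2 b).1 (p.2 b).2
  apply Fin.val_injective
  rw [← h1, ← h2]
  rw [show (⟨b.1, b.2⟩ : Σ i : Fin (n+1), Fin (K i)) = b from rfl] at h1 ⊢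
  rw [show (⟨(p.2 b).1, (p.2 b).2⟩ : Σ i : Fin (n+1), Fin (K i)) = p.2 b from rfl]
  exact (Fintype.card_congr e).symm

lemma fst_fst_eq (p : Perm (Σ i : Fin (n + 1), Fin (K i) × Fin (i : ℕ))
      × Perm (Σ i : Fin (n + 1), Fin (K i)))
    (hp : p ∈ arrowAut (F K)) (a : Σ i : Fin (n + 1), Fin (K i) × Fin (i : ℕ)) :
    (p.1 a).1 = a.1 := by
  have : (F K (p.1 a)).1 = (p.2 (F K a)).1 := by rw [hp a]
  simpa [F] using this.trans (snd_fst_eq p hp (F K a))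

end SigmaDecomp

namespace SigmaDecomp

variable {n : ℕ} {K : Fin (n + 1) → ℕ}

/-- Embedding `Fin (K i)` in the base of the standard model. -/
def baseEquiv (i : Fin (n + 1)) :
    Fin (K i) ≃ {b : Σ i : Fin (n + 1), Fin (K i) // b.1 = i} :=
  { toFun := fun j => ⟨⟨i, j⟩, rfl⟩
    invFun := fun b => b.2 ▸ b.1.2
    left_inv := fun j => rfl
    right_inv := fun b => by
      obtain ⟨⟨i', j⟩, h⟩ := b
      subst h
      rfl }

/-- Embedding `Fin (K i) × Fin i` in the total space of the standard model. -/
def totalEquiv (i : Fin (n + 1)) :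
    (Fin (K i) × Fin (i : ℕ)) ≃ {a : Σ i : Fin (n + 1), Fin (K i) × Fin (i : ℕ) // a.1 = i} :=
  { toFun := fun x => ⟨⟨i, x⟩, rfl⟩
    invFun := fun a => a.2 ▸ a.1.2
    left_inv := fun x => rfl
    right_inv := fun a => by
      obtain ⟨⟨i', x⟩, h⟩ := a
      subst h
      rfl }

variable (K) in
/-- The assembly homomorphism. -/
def toHom : (∀ i : Fin (n + 1),
      arrowAut (Prod.fst : Fin (K i) × Fin (i : ℕ) → Fin (K i))) →* arrowAut (F K) where
  toFun p := ⟨(Perm.sigmaCongrRightHom _ (fun i => (p i).1.1),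
               Perm.sigmaCongrRightHom _ (fun i => (p i).1.2)), by
      rintro ⟨i, x⟩
      show (⟨i, ((p i).1.1 x).1⟩ : Σ i : Fin (n+1), Fin (K i)) = ⟨i, (p i).1.2 x.1⟩
      rw [(p i).2 x]⟩
  map_one' := rfl
  map_mul' p q := by
    apply Subtype.ext
    apply Prod.ext <;> simp <;> rfl

lemma toHom_injective : Function.Injective (toHom K) := by
  intro p q h
  funext i
  apply Subtype.ext
  rw [Subtype.ext_iff, Prod.ext_iff] at h
  obtain ⟨h1, h2⟩ := h
  apply Prod.ext
  · apply Equiv.ext; intro x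
    have := congrArg (fun (σ : Perm (Σ i : Fin (n+1), Fin (K i) × Fin (i:ℕ))) => σ ⟨i, x⟩) h1
    simpa [toHom, Perm.sigmaCongrRightHom, Sigma.mk.inj_iff] using this
  · apply Equiv.ext; intro x
    have := congrArg (fun (σ : Perm (Σ i : Fin (n+1), Fin (K i))) => σ ⟨i, x⟩) h2
    simpa [toHom, Perm.sigmaCongrRightHom, Sigma.mk.inj_iff] using this

lemma toHom_surjective : Function.Surjective (toHom K) := by
  rintro ⟨p, hp⟩
  -- index preservation
  have hb : ∀ b, (p.2 b).1 = b.1 := snd_fst_eq p hp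
  have ha : ∀ a, (p.1 a).1 = a.1 := fst_fst_eq p hp
  -- restricted permutations
  set βr : ∀ i : Fin (n+1), Perm {b : Σ i : Fin (n + 1), Fin (K i) // b.1 = i} :=
    fun i => p.2.subtypePerm (fun b => by simp [hb b]) with hβr
  set αr : ∀ i : Fin (n+1), Perm {a : Σ i : Fin (n + 1), Fin (K i) × Fin (i : ℕ) // a.1 = i} :=
    fun i => p.1.subtypePerm (fun a => by simp [ha a]) with hαr
  set βi : ∀ i : Fin (n+1), Perm (Fin (K i)) :=
    fun i => (baseEquiv i).symm.permCongr (βr i) with hβi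
  set αi : ∀ i : Fin (n+1), Perm (Fin (K i) × Fin (i : ℕ)) :=
    fun i => (totalEquiv i).symm.permCongr (αr i) with hαi
  have keyβ : ∀ (i : Fin (n+1)) (j : Fin (K i)),
      (⟨i, βi i j⟩ : Σ i : Fin (n+1), Fin (K i)) = p.2 ⟨i, j⟩ := by
    intro i j
    have := congrArg Subtype.val ((baseEquiv i).apply_symm_apply (βr i ⟨⟨i, j⟩, rfl⟩))
    exact this
  have keyα : ∀ (i : Fin (n+1)) (x : Fin (K i) × Fin (i : ℕ)),
      (⟨i, αi i x⟩ : Σ i : Fin (n+1), Fin (K i) × Fin (i : ℕ)) = p.1 ⟨i, x⟩ := by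
    intro i x
    have := congrArg Subtype.val ((totalEquiv i).apply_symm_apply (αr i ⟨⟨i, x⟩, rfl⟩))
    exact this
  have hmem : ∀ i : Fin (n+1), (αi i, βi i) ∈
      arrowAut (Prod.fst : Fin (K i) × Fin (i : ℕ) → Fin (K i)) := by
    intro i x
    apply sigma_mk_injective (i := i)
    show (⟨i, (αi i x).1⟩ : Σ i : Fin (n+1), Fin (K i)) = ⟨i, βi i x.1⟩
    calc (⟨i, (αi i x).1⟩ : Σ i : Fin (n+1), Fin (K i))
        = F K ⟨i, αi i x⟩ := rfl
      _ = F K (p.1 ⟨i, x⟩) := by rw [keyα]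
      _ = p.2 (F K ⟨i, x⟩) := hp _
      _ = p.2 ⟨i, x.1⟩ := rfl
      _ = ⟨i, βi i x.1⟩ := (keyβ i x.1).symm
  refine ⟨fun i => ⟨(αi i, βi i), hmem i⟩, ?_⟩
  apply Subtype.ext
  apply Prod.ext
  · apply Equiv.ext
    rintro ⟨i, x⟩
    exact keyα i x
  · apply Equiv.ext
    rintro ⟨i, j⟩
    exact keyβ i j

variable (K) in
/-- The decomposition of the automorphism group of the standard model. -/
noncomputable def iso : (∀ i : Fin (n + 1),
      arrowAut (Prod.fst : Fin (K i) × Fin (i : ℕ) → Fin (K i))) ≃* arrowAut (F K) :=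
  MulEquiv.ofBijective (toHom K) ⟨toHom_injective, toHom_surjective⟩

end SigmaDecomp

/-- The automorphism group of a function `f : A → B` between finite sets in the arrow
category is isomorphic to the product over `i` of the wreath products `Σᵢ ≀ Σ_{kᵢ}`,
where `kᵢ` is the number of `b ∈ B` with fiber of size `i`. -/
theorem stmt_18 {A B : Type*} [Fintype A] [Fintype B] [DecidableEq B]
    (f : A → B) (k : ℕ → ℕ)
    (hk : ∀ i, k i = Fintype.card {b : B // Fintype.card {a : A // f a = b} = i}) :
    Nonempty (arrowAut f ≃* ∀ i : Fin (Fintype.card A + 1), Wreath i (k i)) := by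
  classical
  set n := Fintype.card A with hn
  set K : Fin (n + 1) → ℕ := fun i => k (i : ℕ) with hK
  -- the fiber-size function
  set c : B → Fin (n + 1) := fun b =>
    ⟨Fintype.card {a : A // f a = b}, Nat.lt_succ_of_le (Fintype.card_subtype_le _)⟩ with hc
  -- the base equivalence
  set g : B ≃ Σ i : Fin (n + 1), Fin (K i) :=
    (sigmaFiberEquiv c).symm.trans (sigmaCongrRight fun i =>
      (subtypeEquivRight (p := fun b => c b = i)
        (q := fun b => Fintype.card {a : A // f a = b} = (i : ℕ))
        (fun b => ⟨fun h => congrArg Fin.val h, fun h => Fin.val_injective h⟩)).trans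
      (Fintype.equivFinOfCardEq (hk (i : ℕ)).symm)) with hg
  have hg1 : ∀ b, ((g b).1 : ℕ) = Fintype.card {a : A // f a = b} := fun b => rfl
  -- the fiber equivalences
  set Fb : ∀ b : B, {a : A // f a = b} ≃ Fin (((g b).1 : Fin (n+1)) : ℕ) :=
    fun b => Fintype.equivFinOfCardEq (hg1 b).symm with hFb
  -- the total equivalence
  set eA : A ≃ Σ i : Fin (n + 1), Fin (K i) × Fin (i : ℕ) :=
    (sigmaFiberEquiv f).symm.trans
      ((sigmaCongrRight Fb).trans
        ((sigmaCongrLeft (β := fun p : Σ i : Fin (n + 1), Fin (K i) => Fin ((p.1 : Fin (n+1)) : ℕ)) g).trans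
          ((sigmaAssoc (fun (i : Fin (n + 1)) (_ : Fin (K i)) => Fin (i : ℕ))).trans
            (sigmaCongrRight fun i => sigmaEquivProd (Fin (K i)) (Fin (i : ℕ)))))) with heA
  have hcomm : ∀ a, SigmaDecomp.F K (eA a) = g (f a) := fun a => rfl
  exact ⟨((arrowAutCongr f (SigmaDecomp.F K) eA g hcomm).trans
    (SigmaDecomp.iso K).symm).trans
    (MulEquiv.piCongrRight fun i => (WreathAut.iso (i : ℕ) (K i)).symm)⟩
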